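/- Let M and M' be connected closed smooth manifolds of dimension n whose mod 2 cohomology rings H*(M; ℤ/2) and H*(M'; ℤ/2) are isomorphic as graded rings. Suppose that H*(M; ℤ/2) is generated as a ring by H^r(M; ℤ/2) for some r. Then any graded ring isomorphism φ : H*(M'; ℤ/2) → H*(M; ℤ/2) sends the total Stiefel-Whitney class of M' to the total Stiefel-Whitney class of M. -/

import Mathlib

noncomputable section

/-- The mod 2 cohomology of a connected closed smooth `n`-manifold, packaged with the
structure relevant to Wu's theorem: a graded commutative `ℤ/2`-algebra `A = H^*(M;ℤ/2)`,
the Steenrod squares `Sq^i` with their standard properties (Cartan formula, `Sq^0 = id`,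
`Sq^i x = x²` in degree `i`, vanishing above the degree), evaluation against the mod 2
fundamental class `μ`, Poincaré duality, and the Wu classes `v_k` characterized by
`⟨v_k ∪ x, μ⟩ = ⟨Sq^k x, μ⟩`.  By Wu's theorem the total Stiefel–Whitney class of `M` is
`w(M) = Sq(v) = ∑_{i,k} Sq^i(v_k)`. -/
structure ClosedManifoldMod2Cohomology (n : ℕ) where
  A : Type
  [commRing : CommRing A]
  [algebra : Algebra (ZMod 2) A]
  grading : ℕ → Submodule (ZMod 2) A
  internal : DirectSum.IsInternal grading
  one_mem : (1 : A) ∈ grading 0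
  mul_mem : ∀ {i j : ℕ} {x y : A}, x ∈ grading i → y ∈ grading j → x * y ∈ grading (i + j)
  /-- `M` is connected: `H⁰ = ℤ/2·1` -/
  connected : grading 0 = Submodule.span (ZMod 2) {1}
  /-- `M` is `n`-dimensional: cohomology vanishes above degree `n` -/
  vanish : ∀ j : ℕ, n < j → grading j = ⊥
  /-- the Steenrod squares -/
  Sq : ℕ → A →ₗ[ZMod 2] A
  sq_zero : ∀ x : A, Sq 0 x = x
  sq_square : ∀ (i : ℕ) (x : A), x ∈ grading i → Sq i x = x * x
  sq_vanish : ∀ (i j : ℕ) (x : A), x ∈ grading j → j < i → Sq i x = 0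
  sq_mem : ∀ (i j : ℕ) (x : A), x ∈ grading j → Sq i x ∈ grading (i + j)
  sq_cartan : ∀ (i : ℕ) (x y : A),
    Sq i (x * y) = ∑ j ∈ Finset.range (i + 1), Sq j x * Sq (i - j) y
  /-- evaluation against the mod 2 fundamental class of the closed manifold `M` -/
  mu : A →ₗ[ZMod 2] ZMod 2
  mu_supp : ∀ (j : ℕ) (x : A), j ≠ n → x ∈ grading j → mu x = 0
  /-- Poincaré duality: the cup product pairing into degree `n` is non-degenerate -/
  poincare : ∀ (j : ℕ) (x : A), x ∈ grading j →
    (∀ y ∈ grading (n - j), mu (x * y) = 0) → x = 0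
  /-- the Wu classes -/
  wu : ℕ → A
  wu_mem : ∀ k, wu k ∈ grading k
  wu_spec : ∀ (k : ℕ) (x : A), x ∈ grading (n - k) → mu (wu k * x) = mu (Sq k x)

attribute [instance] ClosedManifoldMod2Cohomology.commRing
  ClosedManifoldMod2Cohomology.algebra

/-- the total Stiefel–Whitney class `w(M) = Sq(v) = ∑_{i,k} Sq^i(v_k)` (Wu's theorem) -/
def ClosedManifoldMod2Cohomology.totalSW {n : ℕ}
    (M : ClosedManifoldMod2Cohomology n) : M.A :=
  ∑ k ∈ Finset.range (n + 1), ∑ i ∈ Finset.range (n + 1), M.Sq i (M.wu k)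

namespace ClosedManifoldMod2Cohomology

variable {n : ℕ} (N : ClosedManifoldMod2Cohomology n)

/-- Projection onto the degree `j` part of the grading. -/
def proj (j : ℕ) : N.A →ₗ[ZMod 2] N.A :=
  (N.grading j).subtype ∘ₗ
    (DirectSum.component (ZMod 2) ℕ (fun i => N.grading i) j) ∘ₗ
    (LinearEquiv.ofBijective (DirectSum.coeLinearMap N.grading) N.internal).symm.toLinearMap

theorem proj_mem (j : ℕ) (x : N.A) : N.proj j x ∈ N.grading j := SetLike.coe_mem _

theorem proj_of_mem_same {i : ℕ} {x : N.A} (hx : x ∈ N.grading i) : N.proj i x = x := by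
  have := N.internal.ofBijective_coeLinearMap_of_mem (i := i) hx
  simp only [proj, LinearMap.coe_comp, Function.comp_apply, LinearEquiv.coe_coe,
    ← DirectSum.apply_eq_component, this, Submodule.subtype_apply]

theorem proj_of_mem_ne {i j : ℕ} (h : i ≠ j) {x : N.A} (hx : x ∈ N.grading i) :
    N.proj j x = 0 := by
  have := N.internal.ofBijective_coeLinearMap_of_mem_ne (i := i) (j := j) h hx
  simp only [proj, LinearMap.coe_comp, Function.comp_apply, LinearEquiv.coe_coe,
    ← DirectSum.apply_eq_component, this, Submodule.subtype_apply, ZeroMemClass.coe_zero]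

/-- If the cohomology is generated in degree `r`, all pieces in degrees not a multiple of
`r` vanish. -/
theorem grading_eq_bot (r : ℕ)
    (hgen : Algebra.adjoin (ZMod 2) (N.grading r : Set N.A) = ⊤)
    (j : ℕ) (hj : ∀ m : ℕ, j ≠ m * r) : N.grading j = ⊥ := by
  set p : Submodule (ZMod 2) N.A := ⨆ m : ℕ, N.grading (m * r) with hp
  have hmul : ∀ x ∈ p, ∀ y ∈ p, x * y ∈ p := by
    intro x hx
    refine Submodule.iSup_induction (motive := fun x => ∀ y ∈ p, x * y ∈ p)
      (fun m => N.grading (m * r)) hx ?_ ?_ ?_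
    · intro m x hxm y hy
      refine Submodule.iSup_induction (motive := fun y => x * y ∈ p)
        (fun m => N.grading (m * r)) hy ?_ ?_ ?_
      · intro m' y hym'
        refine Submodule.mem_iSup_of_mem (m + m') ?_
        have := N.mul_mem hxm hym'
        rwa [← add_mul] at this
      · simp
      · intro a b ha hb; rw [mul_add]; exact add_mem ha hb
    · intro y _; simp
    · intro a b ha hb y hy; rw [add_mul]; exact add_mem (ha y hy) (hb y hy)
  have h1p : (1 : N.A) ∈ p :=
    Submodule.mem_iSup_of_mem 0 (by simpa using N.one_mem)
  have htop : ∀ x : N.A, x ∈ p := by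
    intro x
    have hx : x ∈ Algebra.adjoin (ZMod 2) (N.grading r : Set N.A) := hgen ▸ trivial
    refine Algebra.adjoin_induction (fun y hy => ?_) (fun c => ?_)
      (fun a b _ _ ha hb => add_mem ha hb) (fun a b _ _ ha hb => hmul a ha b hb) hx
    · exact Submodule.mem_iSup_of_mem 1 (by rwa [one_mul])
    · rw [Algebra.algebraMap_eq_smul_one]; exact p.smul_mem c h1p
  ext x
  simp only [Submodule.mem_bot]
  constructor
  · intro hx
    have h1 : N.proj j x = x := N.proj_of_mem_same hx
    have h2 : N.proj j x = 0 := by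
      refine Submodule.iSup_induction (motive := fun y => N.proj j y = 0)
        (fun m => N.grading (m * r)) (htop x) ?_ (map_zero _) ?_
      · intro m y hym
        exact N.proj_of_mem_ne (i := m * r) (j := j) (fun h => hj m h.symm) hym
      · intro a b ha hb; rw [map_add, ha, hb, add_zero]
    rw [← h1, h2]
  · rintro rfl; exact zero_mem _

/-- The evaluation against the fundamental class is injective in top degree. -/
theorem mu_inj {x : N.A} (hx : x ∈ N.grading n) (hmu : N.mu x = 0) : x = 0 := by
  apply N.poincare n x hx
  intro y hy
  rw [Nat.sub_self, N.connected, Submodule.mem_span_singleton] at hy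
  obtain ⟨c, rfl⟩ := hy
  rw [mul_smul_comm, mul_one, map_smul, hmu, smul_zero]

end ClosedManifoldMod2Cohomology

/-- **Choi–Masuda–Suh (ch-ma-su10).**  Let `M`, `M'` be connected closed smooth
`n`-manifolds with isomorphic mod 2 cohomology rings, and suppose `H^*(M;ℤ/2)` is
generated as a ring by `H^r(M;ℤ/2)` for some `r`.  Then any graded ring isomorphism
`H^*(M';ℤ/2) → H^*(M;ℤ/2)` sends the total Stiefel–Whitney class of `M'` to that
of `M`. -/
theorem graded_iso_preserves_stiefel_whitney (n r : ℕ)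
    (M M' : ClosedManifoldMod2Cohomology n)
    (hgen : Algebra.adjoin (ZMod 2) (M.grading r : Set M.A) = ⊤)
    (φ : M'.A ≃+* M.A)
    (hφ : ∀ (j : ℕ) (x : M'.A), x ∈ M'.grading j → φ x ∈ M.grading j) :
    φ M'.totalSW = M.totalSW := by
  classical
  -- φ commutes with the ZMod 2 algebra structure
  have hcomm : ∀ c : ZMod 2, φ (algebraMap (ZMod 2) M'.A c) = algebraMap (ZMod 2) M.A c := by
    intro c
    obtain ⟨k, rfl⟩ := (ZMod.natCast_rightInverse (n := 2)).surjective c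
    simp [map_natCast]
  -- φ commutes with the projections
  have hproj : ∀ (j : ℕ) (x : M'.A), φ (M'.proj j x) = M.proj j (φ x) := by
    intro j x
    have hx : x ∈ ⨆ i, M'.grading i := by
      rw [M'.internal.submodule_iSup_eq_top]; trivial
    refine Submodule.iSup_induction (motive := fun x => φ (M'.proj j x) = M.proj j (φ x))
      M'.grading hx ?_ (by simp) ?_
    · intro i y hy
      by_cases h : i = j
      · subst h
        rw [M'.proj_of_mem_same hy, M.proj_of_mem_same (hφ i y hy)]
      · rw [M'.proj_of_mem_ne h hy, M.proj_of_mem_ne h (hφ i y hy), map_zero]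
    · intro a b ha hb
      simp only [map_add, ha, hb]
  -- the inverse of φ is also graded
  have hφsymm : ∀ (j : ℕ) (x : M.A), x ∈ M.grading j → φ.symm x ∈ M'.grading j := by
    intro j x hx
    have h1 : φ (M'.proj j (φ.symm x)) = x := by
      rw [hproj, RingEquiv.apply_symm_apply, M.proj_of_mem_same hx]
    have h2 : M'.proj j (φ.symm x) = φ.symm x := by
      apply φ.injective
      rw [h1, RingEquiv.apply_symm_apply]
    rw [← h2]; exact M'.proj_mem _ _
  -- the cohomology of M' is also generated in degree r
  have hsymm_adj : ∀ y : M.A, φ.symm y ∈ Algebra.adjoin (ZMod 2) (M'.grading r : Set M'.A) := by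
    intro y
    have hy : y ∈ Algebra.adjoin (ZMod 2) (M.grading r : Set M.A) := hgen ▸ trivial
    induction hy using Algebra.adjoin_induction with
    | mem z hz => exact Algebra.subset_adjoin (hφsymm r z hz)
    | algebraMap c =>
      have hc : φ.symm (algebraMap (ZMod 2) M.A c) = algebraMap (ZMod 2) M'.A c := by
        apply φ.injective; rw [RingEquiv.apply_symm_apply, hcomm]
      rw [hc]; exact algebraMap_mem _ c
    | add a b _ _ ha hb => rw [map_add]; exact add_mem ha hb
    | mul a b _ _ ha hb => rw [map_mul]; exact mul_mem ha hb
  have hgen' : Algebra.adjoin (ZMod 2) (M'.grading r : Set M'.A) = ⊤ := by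
    rw [eq_top_iff]
    intro x _
    have := hsymm_adj (φ x)
    rwa [RingEquiv.symm_apply_apply] at this
  -- intermediate degrees vanish
  have hvan : ∀ i : ℕ, 0 < i → i < r → M.grading (i + r) = ⊥ := by
    intro i h0 hr
    refine M.grading_eq_bot r hgen (i + r) ?_
    intro m hm
    rcases m with _ | _ | m
    · simp at hm; omega
    · simp at hm; omega
    · have hr2 : (m + 1 + 1) * r = m * r + r + r := by ring
      rw [hr2] at hm
      omega
  -- φ commutes with the Steenrod squares
  have key : ∀ (x : M'.A) (i : ℕ), φ (M'.Sq i x) = M.Sq i (φ x) := by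
    intro x
    have hx : x ∈ Algebra.adjoin (ZMod 2) (M'.grading r : Set M'.A) := hgen' ▸ trivial
    refine Algebra.adjoin_induction
      (p := fun x _ => ∀ i, φ (M'.Sq i x) = M.Sq i (φ x))
      (fun y hy i => ?_) (fun c i => ?_)
      (fun a b _ _ ha hb i => by simp only [map_add, ha, hb])
      (fun a b _ _ ha hb i => ?_) hx
    · rcases lt_trichotomy i r with h | h | h
      · rcases Nat.eq_zero_or_pos i with rfl | h0
        · rw [M'.sq_zero, M.sq_zero]
        · have h1 : M'.Sq i y = 0 := by
            have hm : φ (M'.Sq i y) ∈ M.grading (i + r) := hφ _ _ (M'.sq_mem i r y hy)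
            rw [hvan i h0 h, Submodule.mem_bot] at hm
            apply φ.injective; rw [hm, map_zero]
          have h2 : M.Sq i (φ y) = 0 := by
            have hm := M.sq_mem i r (φ y) (hφ _ _ hy)
            rwa [hvan i h0 h, Submodule.mem_bot] at hm
          rw [h1, h2, map_zero]
      · subst h
        rw [M'.sq_square i y hy, M.sq_square i (φ y) (hφ _ _ hy), map_mul]
      · rw [M'.sq_vanish i r y hy h, M.sq_vanish i r (φ y) (hφ _ _ hy) h, map_zero]
    · rcases Nat.eq_zero_or_pos i with rfl | h0
      · rw [M'.sq_zero, M.sq_zero, hcomm]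
      · have h1 : M'.Sq i (algebraMap (ZMod 2) M'.A c) = 0 := by
          rw [Algebra.algebraMap_eq_smul_one, map_smul,
            M'.sq_vanish i 0 1 M'.one_mem h0, smul_zero]
        have h2 : M.Sq i (φ (algebraMap (ZMod 2) M'.A c)) = 0 := by
          rw [hcomm, Algebra.algebraMap_eq_smul_one, map_smul,
            M.sq_vanish i 0 1 M.one_mem h0, smul_zero]
        rw [h1, h2, map_zero]
    · rw [show φ (a * b) = φ a * φ b from map_mul φ a b,
        M'.sq_cartan i a b, M.sq_cartan i (φ a) (φ b), map_sum]
      exact Finset.sum_congr rfl fun j _ => by rw [map_mul, ha, hb]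
  -- φ preserves evaluation against the fundamental class in top degree
  have hmu : ∀ x : M'.A, x ∈ M'.grading n → M.mu (φ x) = M'.mu x := by
    intro x hx
    have hiff : M'.mu x = 0 ↔ M.mu (φ x) = 0 := by
      constructor
      · intro h; rw [M'.mu_inj hx h, map_zero, map_zero]
      · intro h
        have : φ x = 0 := M.mu_inj (hφ n x hx) h
        have hx0 : x = 0 := by apply φ.injective; rw [this, map_zero]
        rw [hx0, map_zero]
    have : ∀ a b : ZMod 2, (a = 0 ↔ b = 0) → b = a := by decide
    exact this _ _ hiff
  -- φ preserves the Wu classes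
  have hwu : ∀ k : ℕ, k ≤ n → φ (M'.wu k) = M.wu k := by
    intro k hk
    have hz : φ (M'.wu k) - M.wu k ∈ M.grading k :=
      sub_mem (hφ k _ (M'.wu_mem k)) (M.wu_mem k)
    have hzero : φ (M'.wu k) - M.wu k = 0 := by
      refine M.poincare k _ hz ?_
      intro y hy
      have hy' : φ.symm y ∈ M'.grading (n - k) := hφsymm _ y hy
      have mem1 : M'.wu k * φ.symm y ∈ M'.grading n := by
        have := M'.mul_mem (M'.wu_mem k) hy'
        rwa [Nat.add_sub_cancel' hk] at this
      have mem2 : M'.Sq k (φ.symm y) ∈ M'.grading n := by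
        have := M'.sq_mem k (n - k) _ hy'
        rwa [Nat.add_sub_cancel' hk] at this
      have e2 : M.mu (φ (M'.wu k) * y) = M'.mu (M'.wu k * φ.symm y) := by
        rw [show φ (M'.wu k) * y = φ (M'.wu k * φ.symm y) by
          rw [map_mul, RingEquiv.apply_symm_apply]]
        exact hmu _ mem1
      have e4 : M'.mu (M'.Sq k (φ.symm y)) = M.mu (M.Sq k y) := by
        rw [← hmu _ mem2, key, RingEquiv.apply_symm_apply]
      rw [sub_mul, map_sub, e2, M'.wu_spec k _ hy', e4, M.wu_spec k y hy, sub_self]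
    exact sub_eq_zero.mp hzero
  -- conclude
  unfold ClosedManifoldMod2Cohomology.totalSW
  rw [map_sum]
  refine Finset.sum_congr rfl fun k hk => ?_
  rw [map_sum]
  refine Finset.sum_congr rfl fun i _ => ?_
  rw [key, hwu k (Nat.lt_succ_iff.mp (Finset.mem_range.mp hk))]


end
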